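/- Let G be a Hausdorff topological group with a partial order ≤ compatible with the group operation such that {x : x < g} is open for every g ∈ G, and let T₁, …, Tₙ be LCF0 subsets of the positive cone. Then there is no strictly increasing sequence in Eₙ = T₁ + ⋯ + Tₙ; i.e., no function f : ℕ → Eₙ with f(k) < f(k+1) for all k. -/

import Mathlib

def LCF0 {G : Type*} [AddGroup G] [TopologicalSpace G] (T : Set G) : Prop :=
  (0 : G) ∉ T ∧ ∀ u : Set G, IsOpen u → (0 : G) ∈ u → (T \ u).Finite

section Aux

open Filter

variable {G : Type*} [AddGroup G] [TopologicalSpace G]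

lemma aux_add_lt_right [PartialOrder G]
    (hcompat : ∀ a b c d : G, a ≤ b → c ≤ d → a + c ≤ b + d)
    {a b : G} (c : G) (h : a < b) : a + c < b + c :=
  lt_of_le_of_ne (hcompat _ _ _ _ h.le le_rfl) (fun he => h.ne (add_right_cancel he))

lemma aux_add_lt_left [PartialOrder G]
    (hcompat : ∀ a b c d : G, a ≤ b → c ≤ d → a + c ≤ b + d)
    {a b : G} (c : G) (h : a < b) : c + a < c + b :=
  lt_of_le_of_ne (hcompat _ _ _ _ le_rfl h.le) (fun he => h.ne (add_left_cancel he))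

lemma aux_sum_le [PartialOrder G]
    (hcompat : ∀ a b c d : G, a ≤ b → c ≤ d → a + c ≤ b + d) :
    ∀ {n : ℕ} (a b : Fin n → G), (∀ i, a i ≤ b i) →
      (List.ofFn a).sum ≤ (List.ofFn b).sum := by
  intro n
  induction n with
  | zero => intro a b _; simp
  | succ m ih =>
    intro a b h
    rw [List.ofFn_succ, List.ofFn_succ, List.sum_cons, List.sum_cons]
    exact hcompat _ _ _ _ (h 0) (ih _ _ (fun i => h i.succ))

lemma aux_sum_lt [PartialOrder G]
    (hcompat : ∀ a b c d : G, a ≤ b → c ≤ d → a + c ≤ b + d) :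
    ∀ {n : ℕ} (a b : Fin n → G), (∀ i, a i ≤ b i) → (∃ j, a j < b j) →
      (List.ofFn a).sum < (List.ofFn b).sum := by
  intro n
  induction n with
  | zero => intro a b _ hj; exact absurd hj (by simp [Fin.isEmpty'.forall_iff])
  | succ m ih =>
    intro a b h hj
    obtain ⟨j, hjlt⟩ := hj
    rw [List.ofFn_succ, List.ofFn_succ, List.sum_cons, List.sum_cons]
    induction j using Fin.cases with
    | zero =>
      have h1 : a 0 + (List.ofFn fun i => a i.succ).sum
          < b 0 + (List.ofFn fun i => a i.succ).sum :=
        aux_add_lt_right hcompat _ hjlt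
      exact lt_of_lt_of_le h1
        (hcompat _ _ _ _ le_rfl (aux_sum_le hcompat _ _ (fun i => h i.succ)))
    | succ j' =>
      have h1 : (List.ofFn fun i => a i.succ).sum < (List.ofFn fun i => b i.succ).sum :=
        ih _ _ (fun i => h i.succ) ⟨j', hjlt⟩
      exact lt_of_lt_of_le (aux_add_lt_left hcompat _ h1)
        (hcompat _ _ _ _ (h 0) le_rfl)

lemma aux_tendsto_sum [IsTopologicalAddGroup G] :
    ∀ {n : ℕ} (a : ℕ → Fin n → G) (c : Fin n → G),
      (∀ i, Tendsto (fun m => a m i) atTop (nhds (c i))) →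
      Tendsto (fun m => (List.ofFn (a m)).sum) atTop (nhds ((List.ofFn c).sum)) := by
  intro n
  induction n with
  | zero => intro a c _; simp [tendsto_const_nhds]
  | succ m ih =>
    intro a c h
    simp only [List.ofFn_succ, List.sum_cons]
    exact (h 0).add (ih (fun k => fun i => a k i.succ) _ (fun i => h i.succ))

/-- Dichotomy: a sequence with values in an LCF0 set either tends to 0 or has a
constant subsequence. -/
lemma aux_dich {T : Set G} (hT : LCF0 T) (a : ℕ → G) (ha : ∀ k, a k ∈ T) :
    Tendsto a atTop (nhds 0) ∨ ∃ c, ∃ φ : ℕ → ℕ, StrictMono φ ∧ ∀ m, a (φ m) = c := by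
  by_cases h : ∃ x, {k | a k = x}.Infinite
  · obtain ⟨x, hx⟩ := h
    right
    refine ⟨x, ?_⟩
    have hfreq : ∃ᶠ k in atTop, a k = x := by
      rw [← Nat.cofinite_eq_atTop]
      exact Filter.frequently_cofinite_iff_infinite.2 hx
    exact extraction_of_frequently_atTop hfreq
  · push_neg at h
    left
    rw [tendsto_nhds]
    intro u hu h0u
    rw [← Nat.cofinite_eq_atTop]
    have hfin : (T \ u).Finite := hT.2 u hu h0u
    rw [Filter.mem_cofinite]
    refine Set.Finite.subset (hfin.biUnion (fun x _ => h x)) ?_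
    intro k hk
    exact Set.mem_biUnion ⟨ha k, hk⟩ rfl

/-- Extract a subsequence along which every coordinate converges, being either
constant or tending to 0. -/
lemma aux_ext :
    ∀ (n : ℕ) (T : Fin n → Set G), (∀ i, LCF0 (T i)) →
      ∀ (a : ℕ → Fin n → G), (∀ k i, a k i ∈ T i) →
      ∃ φ : ℕ → ℕ, StrictMono φ ∧ ∃ c : Fin n → G,
        ∀ i, Tendsto (fun m => a (φ m) i) atTop (nhds (c i)) ∧
          ((∀ m, a (φ m) i = c i) ∨ c i = 0) := by
  intro n
  induction n with
  | zero =>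
    intro T _ a _
    exact ⟨id, strictMono_id, Fin.elim0, fun i => i.elim0⟩
  | succ m ih =>
    intro T hT a ha
    rcases aux_dich (hT 0) (fun k => a k 0) (fun k => ha k 0) with h0 | ⟨x, φ₀, hφ₀, hconst⟩
    · obtain ⟨φ, hφ, c', hc'⟩ := ih (fun i => T i.succ) (fun i => hT i.succ)
        (fun k i => a k i.succ) (fun k i => ha k i.succ)
      refine ⟨φ, hφ, Fin.cons 0 c', ?_⟩
      intro i
      induction i using Fin.cases with
      | zero =>
        refine ⟨?_, Or.inr rfl⟩
        exact h0.comp hφ.tendsto_atTop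
      | succ i' => simpa using hc' i'
    · obtain ⟨φ, hφ, c', hc'⟩ := ih (fun i => T i.succ) (fun i => hT i.succ)
        (fun k i => a (φ₀ k) i.succ) (fun k i => ha (φ₀ k) i.succ)
      refine ⟨φ₀ ∘ φ, hφ₀.comp hφ, Fin.cons x c', ?_⟩
      intro i
      induction i using Fin.cases with
      | zero =>
        refine ⟨?_, Or.inl (fun m => hconst (φ m))⟩
        simpa [hconst] using (tendsto_const_nhds : Tendsto (fun _ : ℕ => x) atTop (nhds x))
      | succ i' => simpa using hc' i'

end Aux

open Filter

theorem stmt_13 {G : Type*} [AddGroup G] [TopologicalSpace G] [IsTopologicalAddGroup G]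
    [T2Space G] [PartialOrder G]
    (hcompat : ∀ a b c d : G, a ≤ b → c ≤ d → a + c ≤ b + d)
    (hopen : ∀ g : G, IsOpen {x : G | x < g})
    (n : ℕ) (T : Fin n → Set G) (hT : ∀ i, LCF0 (T i))
    (hTpos : ∀ i, T i ⊆ {g : G | 0 < g}) :
    ¬∃ f : ℕ → G,
      (∀ k, f k ∈ {g : G | ∃ t : Fin n → G, (∀ i, t i ∈ T i) ∧ (List.ofFn t).sum = g}) ∧
      ∀ k, f k < f (k + 1) := by
  rintro ⟨f, hf, hlt⟩
  have hmono : StrictMono f := strictMono_nat_of_lt_succ hlt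
  choose t ht hsum using hf
  obtain ⟨φ, hφ, c, hc⟩ := aux_ext n T hT t ht
  by_cases hall : ∀ i, ∀ m : ℕ, t (φ m) i = c i
  · -- all coordinates constant along the subsequence: f (φ 0) = f (φ 1), contradiction
    have he : f (φ 0) = f (φ 1) := by
      rw [← hsum, ← hsum]
      congr 1
      congr 1
      funext i
      rw [hall i 0, hall i 1]
    exact absurd he (hmono (hφ (by norm_num : (0:ℕ) < 1))).ne
  · push_neg at hall
    obtain ⟨i₀, hi₀⟩ := hall
    have hci₀ : c i₀ = 0 := by
      rcases (hc i₀).2 with h | h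
      · obtain ⟨m, hm⟩ := hi₀; exact absurd (h m) hm
      · exact h
    set s : G := (List.ofFn c).sum with hs
    have hcle : ∀ (m : ℕ) (i : Fin n), c i ≤ t (φ m) i := by
      intro m i
      rcases (hc i).2 with h | h
      · exact (h m).symm.le
      · rw [h]; exact (hTpos i (ht (φ m) i)).le
    have hslt : ∀ m : ℕ, s < f (φ m) := by
      intro m
      rw [← hsum (φ m)]
      refine aux_sum_lt hcompat _ _ (hcle m) ⟨i₀, ?_⟩
      rw [hci₀]
      exact hTpos i₀ (ht (φ m) i₀)
    have htend : Tendsto (fun m => f (φ m)) atTop (nhds s) := by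
      have := aux_tendsto_sum (fun m => t (φ m)) c (fun i => (hc i).1)
      simpa only [hsum] using this
    have hv : ∀ᶠ m in atTop, f (φ m) ∈ {x : G | x < f (φ 1)} :=
      htend.eventually (IsOpen.mem_nhds (hopen (f (φ 1))) (hslt 1))
    obtain ⟨m, hmv, hm2⟩ := (hv.and (eventually_ge_atTop 2)).exists
    exact lt_asymm hmv (hmono (hφ (by omega : (1:ℕ) < m)))
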